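/- (Claim 12) Let n ≥ 3 and 3 ≤ L ≤ k be integers, and let x_1, …, x_{L−1} ∈ {1,…,L−1}^n be consecutive points under the ≤-order on [k]^n (that is, x_{i+1} = x_i⁺ for 1 ≤ i ≤ L−2). Let X = {y ∈ [k]^n : y ≤ x_{L−1}} and Y = {y ∈ [k]^n : y ≤ x_1}. Then |d(X)| = |d(Y)| if and only if for every 1 ≤ i ≤ L−1 the point x_i has first coordinate equal to i and all other coordinates equal to L−1. -/

import Mathlib

open Finset
open scoped Classical

/-- `R_i(x)`: the set of coordinates of `x` equal to `i`.
The ambient alphabet is `[k+1] = {0,…,k}`. -/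
noncomputable def rset {k N : ℕ} (x : Fin N → Fin (k + 1)) (i : ℕ) : Finset (Fin N) :=
  Finset.univ.filter fun j => (x j : ℕ) = i

/-- the strict binary order on finite sets of coordinates:
`X <_bin Y` iff `X ≠ Y` and `max (X Δ Y) ∈ Y`. -/
def binLT {N : ℕ} (X Y : Finset (Fin N)) : Prop :=
  ∃ m ∈ Y, m ∉ X ∧ ∀ j : Fin N, ((j ∈ X ∧ j ∉ Y) ∨ (j ∈ Y ∧ j ∉ X)) → j ≤ m

/-- the strict `≤`-order on `[k+1]^N`: `x < y` iff `|R_0(x)| > |R_0(y)|`, or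
`|R_0(x)| = |R_0(y)|` and for the largest `i` with `R_i(x) ≠ R_i(y)` we have
`max (R_i(x) Δ R_i(y)) ∈ R_i(y)`. -/
def plt {k N : ℕ} (x y : Fin N → Fin (k + 1)) : Prop :=
  (rset y 0).card < (rset x 0).card ∨
    ((rset x 0).card = (rset y 0).card ∧
      ∃ i : ℕ, binLT (rset x i) (rset y i) ∧ ∀ j : ℕ, i < j → rset x j = rset y j)

/-- the `≤`-order on `[k+1]^N`. -/
def ple {k N : ℕ} (x y : Fin N → Fin (k + 1)) : Prop := x = y ∨ plt x y

/-- `B` is an initial segment of the `≤`-order. -/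
def isInitSeg {k N : ℕ} (B : Finset (Fin N → Fin (k + 1))) : Prop :=
  ∀ y ∈ B, ∀ x, ple x y → x ∈ B

/-- the `d`-shadow: all points obtained from a point of `A` by flipping one
nonzero coordinate to `0`. -/
noncomputable def dShadow {k N : ℕ} (A : Finset (Fin N → Fin (k + 1))) :
    Finset (Fin N → Fin (k + 1)) :=
  A.biUnion fun x =>
    (Finset.univ.filter fun i => x i ≠ 0).image fun i => Function.update x i 0

/-- the initial segment of the `≤`-order on `[k+1]^N` of cardinality `m`. -/
noncomputable def initSeg (k N m : ℕ) : Finset (Fin N → Fin (k + 1)) :=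
  Finset.univ.filter fun x => (Finset.univ.filter fun y => ple y x).card ≤ m

/-- the `C_s`-compression of `A ⊆ [k+1]^(n+1)`: replace each slice
`A_{s,t} = {y : t_s y ∈ A}` by the initial segment of the same size. -/
noncomputable def compress {k n : ℕ} (s : Fin (n + 1)) (A : Finset (Fin (n + 1) → Fin (k + 1))) :
    Finset (Fin (n + 1) → Fin (k + 1)) :=
  Finset.univ.biUnion fun t : Fin (k + 1) =>
    (initSeg k n
        (Finset.univ.filter fun y : Fin n → Fin (k + 1) => s.insertNth t y ∈ A).card).image
      fun y => s.insertNth t y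

/-- `A` is compressed if every `C_s`-compression fixes it. -/
def IsCompressed {k n : ℕ} (A : Finset (Fin (n + 1) → Fin (k + 1))) : Prop :=
  ∀ s : Fin (n + 1), compress s A = A

/-- `B_r`: points with exactly `r` zero coordinates. -/
noncomputable def Bexact (k N r : ℕ) : Finset (Fin N → Fin (k + 1)) :=
  Finset.univ.filter fun x => (rset x 0).card = r

/-- `B_{≥r}`: points with at least `r` zero coordinates. -/
noncomputable def Bge (k N r : ℕ) : Finset (Fin N → Fin (k + 1)) :=
  Finset.univ.filter fun x => r ≤ (rset x 0).card

/-- `m(x)`: the largest coordinate value of `x`. -/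
noncomputable def mval {k N : ℕ} (x : Fin N → Fin (k + 1)) : ℕ :=
  Finset.univ.sup fun i => (x i : ℕ)

/-- the class `C_X`: points with maximal coordinate `s`, attained exactly on `X`,
and exactly `r` zero coordinates. -/
noncomputable def classSet (k N s r : ℕ) (X : Finset (Fin N)) : Finset (Fin N → Fin (k + 1)) :=
  Finset.univ.filter fun x => mval x = s ∧ rset x s = X ∧ (rset x 0).card = r

/-- `[m]^N = {0,…,m−1}^N`. -/
noncomputable def box (k N m : ℕ) : Finset (Fin N → Fin (k + 1)) :=
  Finset.univ.filter fun x => ∀ i, (x i : ℕ) < m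

/-- `{1,…,s−1}^N`. -/
noncomputable def box1 (k N s : ℕ) : Finset (Fin N → Fin (k + 1)) :=
  Finset.univ.filter fun x => ∀ i, 1 ≤ (x i : ℕ) ∧ (x i : ℕ) ≤ s - 1

/-- `B` is a down-set. -/
def isDownSet {k N : ℕ} (B : Finset (Fin N → Fin (k + 1))) : Prop :=
  ∀ y ∈ B, ∀ x : Fin N → Fin (k + 1), (∀ j, (x j : ℕ) ≤ (y j : ℕ)) → x ∈ B

section aux
variable {k N : ℕ}

lemma mem_rset {x : Fin N → Fin (k+1)} {i : ℕ} {j : Fin N} :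
    j ∈ rset x i ↔ (x j : ℕ) = i := by simp [rset]

lemma rset_empty_of_gt (x : Fin N → Fin (k+1)) {i : ℕ} (h : k < i) : rset x i = ∅ := by
  ext j; simp only [mem_rset, Finset.notMem_empty, iff_false]
  have := (x j).isLt; omega

lemma eq_of_rset_eq {x y : Fin N → Fin (k+1)} (h : ∀ i, rset x i = rset y i) : x = y := by
  funext j
  have hj : j ∈ rset y (x j : ℕ) := (h _) ▸ mem_rset.2 rfl
  exact Fin.ext (mem_rset.1 hj).symm

noncomputable def fval {N : ℕ} (X : Finset (Fin N)) : ℕ := ∑ j ∈ X, 2^(j : ℕ)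

lemma fval_mono {X Y : Finset (Fin N)} (h : X ⊆ Y) : fval X ≤ fval Y :=
  Finset.sum_le_sum_of_subset h

lemma sum_two_pow_range (t : ℕ) : ∑ i ∈ Finset.range t, 2^i = 2^t - 1 := by
  induction t with
  | zero => simp
  | succ t ih =>
      rw [Finset.sum_range_succ, ih]
      have := Nat.one_le_two_pow (n := t)
      have : (2:ℕ)^(t+1) = 2^t + 2^t := by ring
      omega

lemma fval_lt_pow {X : Finset (Fin N)} {t : ℕ} (h : ∀ j ∈ X, (j : ℕ) < t) :
    fval X < 2^t := by
  have h1 : fval X = ∑ i ∈ X.image Fin.val, 2^i := by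
    rw [Finset.sum_image (fun a _ b _ hab => Fin.ext hab)]; rfl
  have h2 : X.image Fin.val ⊆ Finset.range t := by
    intro i hi; simp only [Finset.mem_image] at hi
    obtain ⟨j, hj, rfl⟩ := hi; exact Finset.mem_range.2 (h j hj)
  calc fval X ≤ ∑ i ∈ Finset.range t, 2^i := by
        rw [h1]; exact Finset.sum_le_sum_of_subset h2
    _ < 2^t := by rw [sum_two_pow_range]; have := Nat.one_le_two_pow (n := t); omega

lemma fval_dvd {X : Finset (Fin N)} {t : ℕ} (h : ∀ j ∈ X, t < (j : ℕ)) :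
    2^(t+1) ∣ fval X := by
  apply Finset.dvd_sum
  intro j hj
  exact pow_dvd_pow 2 (h j hj)

lemma fval_lt_of_binLT {X Y : Finset (Fin N)} (h : binLT X Y) : fval X < fval Y := by
  obtain ⟨m, hmY, hmX, hmax⟩ := h
  have hXsplit : fval (X ∩ Y) + fval (X \ Y) = fval X := Finset.sum_inter_add_sum_sdiff X Y _
  have hYsplit : fval (Y ∩ X) + fval (Y \ X) = fval Y := Finset.sum_inter_add_sum_sdiff Y X _
  rw [Finset.inter_comm] at hYsplit
  have h1 : fval (X \ Y) < 2^(m:ℕ) := by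
    apply fval_lt_pow
    intro j hj
    rw [Finset.mem_sdiff] at hj
    have hle : j ≤ m := hmax j (Or.inl hj)
    have hne : j ≠ m := by rintro rfl; exact hj.2 hmY
    exact lt_of_le_of_ne hle (by simpa [Fin.ext_iff] using hne)
  have h2 : 2^(m:ℕ) ≤ fval (Y \ X) := by
    apply Finset.single_le_sum (f := fun j : Fin N => 2^(j:ℕ)) (fun i _ => Nat.zero_le _)
    exact Finset.mem_sdiff.2 ⟨hmY, hmX⟩
  omega

lemma binLT_of_fval_lt {X Y : Finset (Fin N)} (h : fval X < fval Y) : binLT X Y := by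
  have hne : X ≠ Y := by rintro rfl; exact lt_irrefl _ h
  have hd : ((X \ Y) ∪ (Y \ X)).Nonempty := by
    rw [Finset.nonempty_iff_ne_empty]
    intro hc
    apply hne
    have h1 : X \ Y = ∅ := Finset.union_eq_empty.1 hc |>.1
    have h2 : Y \ X = ∅ := Finset.union_eq_empty.1 hc |>.2
    exact Finset.Subset.antisymm (Finset.sdiff_eq_empty_iff_subset.1 h1)
      (Finset.sdiff_eq_empty_iff_subset.1 h2)
  set m := ((X \ Y) ∪ (Y \ X)).max' hd with hm
  have hmem : m ∈ (X \ Y) ∪ (Y \ X) := Finset.max'_mem _ hd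
  have hmax : ∀ j : Fin N, ((j ∈ X ∧ j ∉ Y) ∨ (j ∈ Y ∧ j ∉ X)) → j ≤ m := by
    intro j hj
    apply Finset.le_max'
    rw [Finset.mem_union, Finset.mem_sdiff, Finset.mem_sdiff]
    tauto
  rw [Finset.mem_union, Finset.mem_sdiff, Finset.mem_sdiff] at hmem
  rcases hmem with hm1 | hm2
  · exfalso
    have : binLT Y X := ⟨m, hm1.1, hm1.2, fun j hj => hmax j (by tauto)⟩
    have := fval_lt_of_binLT this
    exact absurd h (by exact Nat.lt_asymm this)
  · exact ⟨m, hm2.1, hm2.2, hmax⟩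

lemma binLT_iff_fval {X Y : Finset (Fin N)} : binLT X Y ↔ fval X < fval Y :=
  ⟨fval_lt_of_binLT, binLT_of_fval_lt⟩

lemma binLT_total {X Y : Finset (Fin N)} (hne : X ≠ Y) : binLT X Y ∨ binLT Y X := by
  rcases lt_trichotomy (fval X) (fval Y) with h1 | h1 | h1
  · exact Or.inl (binLT_of_fval_lt h1)
  · exfalso
    have hd : ((X \ Y) ∪ (Y \ X)).Nonempty := by
      rw [Finset.nonempty_iff_ne_empty]
      intro hc
      apply hne
      have h1 : X \ Y = ∅ := Finset.union_eq_empty.1 hc |>.1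
      have h2 : Y \ X = ∅ := Finset.union_eq_empty.1 hc |>.2
      exact Finset.Subset.antisymm (Finset.sdiff_eq_empty_iff_subset.1 h1)
        (Finset.sdiff_eq_empty_iff_subset.1 h2)
    set m := ((X \ Y) ∪ (Y \ X)).max' hd with hm
    have hmem : m ∈ (X \ Y) ∪ (Y \ X) := Finset.max'_mem _ hd
    have hmax : ∀ j : Fin N, ((j ∈ X ∧ j ∉ Y) ∨ (j ∈ Y ∧ j ∉ X)) → j ≤ m := by
      intro j hj
      apply Finset.le_max'
      rw [Finset.mem_union, Finset.mem_sdiff, Finset.mem_sdiff]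
      tauto
    rw [Finset.mem_union, Finset.mem_sdiff, Finset.mem_sdiff] at hmem
    rcases hmem with hm1 | hm1
    · have : binLT Y X := ⟨m, hm1.1, hm1.2, fun j hj => hmax j (by tauto)⟩
      have := fval_lt_of_binLT this
      omega
    · have : binLT X Y := ⟨m, hm1.1, hm1.2, fun j hj => hmax j (by tauto)⟩
      have := fval_lt_of_binLT this
      omega
  · exact Or.inr (binLT_of_fval_lt h1)

lemma fval_inj {X Y : Finset (Fin N)} (h : fval X = fval Y) : X = Y := by
  by_contra hne
  rcases binLT_total hne with h1 | h1 <;> have h2 := fval_lt_of_binLT h1 <;> omega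


lemma digit_sum_lt_pow {T : ℕ} (m : ℕ) (d : ℕ → ℕ) (hd : ∀ i, i < m → d i < T) :
    ∑ i ∈ Finset.range m, d i * T^i < T^m := by
  induction m with
  | zero => simp
  | succ m ih =>
      rw [Finset.sum_range_succ]
      have h1 : ∑ i ∈ Finset.range m, d i * T^i < T^m :=
        ih (fun i hi => hd i (by omega))
      have h2 : (d m + 1) * T^m ≤ T * T^m :=
        Nat.mul_le_mul_right _ (by have := hd m (by omega); omega)
      have h3 : T^(m+1) = T * T^m := by ring
      have hexp : (d m + 1) * T^m = d m * T^m + T^m := by ring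
      omega

lemma lex_lt {T : ℕ} : ∀ (m : ℕ) (d e : ℕ → ℕ), (∀ i, i < m → d i < T) →
    (∀ i, i < m → e i < T) →
    ((∑ i ∈ Finset.range m, d i * T^i) < (∑ i ∈ Finset.range m, e i * T^i) ↔
      ∃ i, i < m ∧ d i < e i ∧ ∀ j, i < j → j < m → d j = e j) := by
  intro m
  induction m with
  | zero => intro d e _ _; simp
  | succ m ih =>
      intro d e hd he
      rw [Finset.sum_range_succ, Finset.sum_range_succ]
      rcases lt_trichotomy (d m) (e m) with h | h | h
      · constructor
        · intro _
          exact ⟨m, by omega, h, fun j h1 h2 => by omega⟩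
        · intro _
          have h1 : ∑ i ∈ Finset.range m, d i * T^i < T^m :=
            digit_sum_lt_pow m d (fun i hi => hd i (by omega))
          have h2 : (d m + 1) * T^m ≤ e m * T^m := Nat.mul_le_mul_right _ (by omega)
          have hexp : (d m + 1) * T^m = d m * T^m + T^m := by ring
          omega
      · have hiff := ih d e (fun i hi => hd i (by omega)) (fun i hi => he i (by omega))
        rw [h]
        constructor
        · intro hlt
          have h0 : ∑ i ∈ Finset.range m, d i * T^i < ∑ i ∈ Finset.range m, e i * T^i := by
            omega
          obtain ⟨i, h1, h2, h3⟩ := hiff.1 h0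
          exact ⟨i, by omega, h2, fun j hj1 hj2 => by
            rcases Nat.lt_or_ge j m with hj | hj
            · exact h3 j hj1 hj
            · have hjm : j = m := by omega
              subst hjm; exact h⟩
        · rintro ⟨i, h1, h2, h3⟩
          have him : i ≠ m := by intro hc; subst hc; omega
          have h0 : ∑ i ∈ Finset.range m, d i * T^i < ∑ i ∈ Finset.range m, e i * T^i :=
            hiff.2 ⟨i, by omega, h2, fun j hj1 hj2 => h3 j hj1 (by omega)⟩
          omega
      · constructor
        · intro hlt
          exfalso
          have h1 : ∑ i ∈ Finset.range m, e i * T^i < T^m :=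
            digit_sum_lt_pow m e (fun i hi => he i (by omega))
          have h2 : (e m + 1) * T^m ≤ d m * T^m := Nat.mul_le_mul_right _ (by omega)
          have hexp : (e m + 1) * T^m = e m * T^m + T^m := by ring
          omega
        · rintro ⟨i, h1, h2, h3⟩
          exfalso
          rcases Nat.lt_or_ge i m with hi | hi
          · have := h3 m (by omega) (by omega); omega
          · have him : i = m := by omega
            subst him; omega

lemma digit_ext {T : ℕ} : ∀ (m : ℕ) (d e : ℕ → ℕ), (∀ i, i < m → d i < T) →
    (∀ i, i < m → e i < T) →
    (∑ i ∈ Finset.range m, d i * T^i) = (∑ i ∈ Finset.range m, e i * T^i) →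
    ∀ i, i < m → d i = e i := by
  intro m
  induction m with
  | zero => intro d e _ _ _ i hi; omega
  | succ m ih =>
      intro d e hd he heq
      rw [Finset.sum_range_succ, Finset.sum_range_succ] at heq
      have h1 : ∑ i ∈ Finset.range m, d i * T^i < T^m :=
        digit_sum_lt_pow m d (fun i hi => hd i (by omega))
      have h2 : ∑ i ∈ Finset.range m, e i * T^i < T^m :=
        digit_sum_lt_pow m e (fun i hi => he i (by omega))
      have htop : d m = e m := by
        by_contra hne
        rcases Nat.lt_or_ge (d m) (e m) with h | h
        · have h5 : (d m + 1) * T^m ≤ e m * T^m := Nat.mul_le_mul_right _ (by omega)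
          have h4 : (d m + 1) * T^m = d m * T^m + T^m := by ring
          omega
        · have h3 : e m < d m := by omega
          have h5 : (e m + 1) * T^m ≤ d m * T^m := Nat.mul_le_mul_right _ (by omega)
          have h4 : (e m + 1) * T^m = e m * T^m + T^m := by ring
          omega
      have hrest := ih d e (fun i hi => hd i (by omega)) (fun i hi => he i (by omega))
        (by rw [htop] at heq; omega)
      intro i hi
      rcases Nat.lt_or_ge i m with h | h
      · exact hrest i h
      · have him : i = m := by omega
        subst him; exact htop

lemma base_split_lt {P A B r s : ℕ} (hr : r < P) (hs : s < P) :
    (A * P + r < B * P + s ↔ A < B ∨ (A = B ∧ r < s)) := by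
  constructor
  · intro h
    rcases lt_trichotomy A B with h1 | h1 | h1
    · exact Or.inl h1
    · subst h1; exact Or.inr ⟨rfl, by omega⟩
    · exfalso
      have h3 : (B + 1) * P ≤ A * P := Nat.mul_le_mul_right _ (by omega)
      have h2 : (B+1) * P = B * P + P := by ring
      omega
  · rintro (h | ⟨rfl, h⟩)
    · have h3 : (A + 1) * P ≤ B * P := Nat.mul_le_mul_right _ (by omega)
      have h2 : (A+1) * P = A * P + P := by ring
      omega
    · omega

lemma base_split_eq {P A B r s : ℕ} (hr : r < P) (hs : s < P)
    (h : A * P + r = B * P + s) : A = B ∧ r = s := by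
  have h1 := (base_split_lt (A := A) (B := B) hr hs)
  have h2 := (base_split_lt (A := B) (B := A) hs hr)
  constructor
  · by_contra hne
    rcases Nat.lt_or_ge A B with hc | hc
    · have := h1.2 (Or.inl hc); omega
    · have hc2 : B < A := by omega
      have := h2.2 (Or.inl hc2); omega
  · by_contra hne
    rcases Nat.lt_or_ge r s with hc | hc
    · have := h1.2 (Or.inr ⟨by
        by_contra hA
        rcases Nat.lt_or_ge A B with hc2 | hc2
        · have := h1.2 (Or.inl hc2); omega
        · have := h2.2 (Or.inl (by omega)); omega, hc⟩)
      omega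
    · have hAB : A = B := by
        by_contra hA
        rcases Nat.lt_or_ge A B with hc2 | hc2
        · have := h1.2 (Or.inl hc2); omega
        · have := h2.2 (Or.inl (by omega)); omega
      have := h2.2 (Or.inr ⟨hAB.symm, by omega⟩); omega

noncomputable def rank {k N : ℕ} (x : Fin N → Fin (k+1)) : ℕ :=
  (N - (rset x 0).card) * (2^N)^(k+1) +
    ∑ i ∈ Finset.range (k+1), fval (rset x i) * (2^N)^i

lemma fval_lt_T {N : ℕ} (X : Finset (Fin N)) : fval X < 2^N :=
  fval_lt_pow (fun j _ => j.isLt)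

lemma zcard_le {x : Fin N → Fin (k+1)} : (rset x 0).card ≤ N := by
  have := Finset.card_le_card (Finset.subset_univ (rset x 0))
  simpa using this

lemma plt_iff_rank {x y : Fin N → Fin (k+1)} : plt x y ↔ rank x < rank y := by
  have hsx : ∑ i ∈ Finset.range (k+1), fval (rset x i) * (2^N)^i < (2^N)^(k+1) :=
    digit_sum_lt_pow _ _ (fun i _ => fval_lt_T _)
  have hsy : ∑ i ∈ Finset.range (k+1), fval (rset y i) * (2^N)^i < (2^N)^(k+1) :=
    digit_sum_lt_pow _ _ (fun i _ => fval_lt_T _)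
  rw [rank, rank, base_split_lt hsx hsy]
  have hzx : (rset x 0).card ≤ N := zcard_le
  have hzy : (rset y 0).card ≤ N := zcard_le
  constructor
  · rintro (h | ⟨heq, i, hbin, habove⟩)
    · left; omega
    · right
      refine ⟨by omega, ?_⟩
      rw [lex_lt _ _ _ (fun i _ => fval_lt_T _) (fun i _ => fval_lt_T _)]
      have hik : i < k + 1 := by
        obtain ⟨m, hmY, -, -⟩ := hbin
        have := mem_rset.1 hmY
        have := (y m).isLt
        omega
      exact ⟨i, hik, fval_lt_of_binLT hbin,
        fun j h1 _ => by rw [habove j h1]⟩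
  · rintro (h | ⟨heq, hlt⟩)
    · left; omega
    · right
      refine ⟨by omega, ?_⟩
      rw [lex_lt _ _ _ (fun i _ => fval_lt_T _) (fun i _ => fval_lt_T _)] at hlt
      obtain ⟨i, hik, hvlt, hvab⟩ := hlt
      refine ⟨i, binLT_of_fval_lt hvlt, fun j hj => ?_⟩
      rcases Nat.lt_or_ge k j with h1 | h1
      · rw [rset_empty_of_gt x h1, rset_empty_of_gt y h1]
      · exact fval_inj (hvab j hj (by omega))

lemma rank_inj {x y : Fin N → Fin (k+1)} (h : rank x = rank y) : x = y := by
  have hsx : ∑ i ∈ Finset.range (k+1), fval (rset x i) * (2^N)^i < (2^N)^(k+1) :=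
    digit_sum_lt_pow _ _ (fun i _ => fval_lt_T _)
  have hsy : ∑ i ∈ Finset.range (k+1), fval (rset y i) * (2^N)^i < (2^N)^(k+1) :=
    digit_sum_lt_pow _ _ (fun i _ => fval_lt_T _)
  rw [rank, rank] at h
  obtain ⟨-, h2⟩ := base_split_eq hsx hsy h
  have hdig := digit_ext (k+1) _ _ (fun i _ => fval_lt_T _) (fun i _ => fval_lt_T _) h2
  apply eq_of_rset_eq
  intro i
  rcases Nat.lt_or_ge k i with h1 | h1
  · rw [rset_empty_of_gt x h1, rset_empty_of_gt y h1]
  · exact fval_inj (hdig i (by omega))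

lemma ple_iff_rank {x y : Fin N → Fin (k+1)} : ple x y ↔ rank x ≤ rank y := by
  constructor
  · rintro (rfl | h)
    · exact le_refl _
    · exact (plt_iff_rank.1 h).le
  · intro h
    rcases Nat.lt_or_ge (rank x) (rank y) with h1 | h1
    · exact Or.inr (plt_iff_rank.2 h1)
    · exact Or.inl (rank_inj (by omega))

lemma plt_total {x y : Fin N → Fin (k+1)} (h : x ≠ y) : plt x y ∨ plt y x := by
  rcases lt_trichotomy (rank x) (rank y) with h1 | h1 | h1
  · exact Or.inl (plt_iff_rank.2 h1)
  · exact absurd (rank_inj h1) h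
  · exact Or.inr (plt_iff_rank.2 h1)

lemma zerofree_of_plt {x y : Fin N → Fin (k+1)} (h : plt x y)
    (hy : (rset x 0).card = 0) : (rset y 0).card = 0 := by
  rcases h with h | ⟨h, -⟩ <;> omega

lemma dvd_lt_imp {d a b : ℕ} (h1 : d ∣ a) (h2 : d ∣ b) (h : a < b) : a + d ≤ b := by
  obtain ⟨q1, rfl⟩ := h1
  obtain ⟨q2, rfl⟩ := h2
  have hd : 0 < d := by
    rcases Nat.eq_zero_or_pos d with rfl | hd
    · simp at h
    · exact hd
  have hq : q1 < q2 := by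
    by_contra hc
    have : d * q2 ≤ d * q1 := Nat.mul_le_mul_left _ (by omega)
    omega
  have : d * (q1 + 1) ≤ d * q2 := Nat.mul_le_mul_left _ (by omega)
  have h3 : d * (q1+1) = d * q1 + d := by ring
  omega

section succ
variable {k N : ℕ}

lemma succ_spec (x c : Fin N → Fin (k+1)) (v : ℕ) (t : Fin N)
    (hv1 : 1 ≤ v) (hvk : v < k)
    (hmin : ∀ j, v ≤ (x j : ℕ)) (ht : (x t : ℕ) = v)
    (htmin : ∀ j, (x j : ℕ) = v → t ≤ j)
    (hc : ∀ j, (c j : ℕ) =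
      if (x j : ℕ) ≤ v + 1 then
        (if j ∈ insert t ((rset x (v+1)).filter (fun j => t < j)) then v+1 else 1)
      else (x j : ℕ)) :
    plt x c ∧ ∀ w, plt x w → ple c w := by
  classical
  set S : Finset (Fin N) := rset x (v+1) with hS
  set S' : Finset (Fin N) := insert t (S.filter (fun j => t < j)) with hS'
  have htS : t ∉ S := by
    simp only [hS, mem_rset]; omega
  have hS'sub : ∀ j ∈ S', (x j : ℕ) ≤ v + 1 := by
    intro j hj
    rcases Finset.mem_insert.1 hj with rfl | hj
    · omega
    · have := (Finset.mem_filter.1 hj).1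
      rw [hS, mem_rset] at this; omega
  -- class computations for c
  have hca : ∀ i : ℕ, v + 2 ≤ i → rset c i = rset x i := by
    intro i hi
    ext j
    simp only [mem_rset]
    rw [hc j]
    split_ifs with h1 h2
    · omega
    · omega
    · tauto
  have hcb : rset c (v+1) = S' := by
    ext j
    simp only [mem_rset]
    rw [hc j]
    split_ifs with h1 h2
    · exact iff_of_true rfl h2
    · exact iff_of_false (by omega) h2
    · exact iff_of_false (by omega) (fun hh => h1 (hS'sub j hh))
  have hcc : ∀ i : ℕ, 2 ≤ i → i ≤ v → rset c i = ∅ := by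
    intro i h1 h2
    ext j
    simp only [mem_rset, Finset.notMem_empty, iff_false]
    rw [hc j]
    split_ifs with hh1 hh2 <;> first | exact not_false | omega | (have := hmin j; omega)
  have hcz : rset c 0 = ∅ := by
    ext j
    simp only [mem_rset, Finset.notMem_empty, iff_false]
    rw [hc j]
    split_ifs with hh1 hh2 <;> first | exact not_false | omega | (have := hmin j; omega)
  have hxz : rset x 0 = ∅ := by
    ext j
    simp only [mem_rset, Finset.notMem_empty, iff_false]
    have := hmin j; omega
  -- claim 1 : plt x c
  have hclaim1 : plt x c := by
    right
    refine ⟨by rw [hxz, hcz], v+1, ?_, ?_⟩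
    · refine ⟨t, ?_, ?_, ?_⟩
      · rw [hcb]; exact Finset.mem_insert_self _ _
      · rw [← hS]; exact htS
      · intro j hj
        rw [hcb, ← hS] at hj
        rcases hj with ⟨hj1, hj2⟩ | ⟨hj1, hj2⟩
        · by_contra hcon
          push_neg at hcon
          exact hj2 (Finset.mem_insert.2 (Or.inr (Finset.mem_filter.2 ⟨hj1, hcon⟩)))
        · rcases Finset.mem_insert.1 hj1 with rfl | hmem
          · exact le_refl _
          · exact absurd (Finset.mem_filter.1 hmem).1 hj2
    · intro j hj
      exact (hca j (by omega)).symm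
  refine ⟨hclaim1, ?_⟩
  -- claim 2
  intro w hw
  have hwz : rset w 0 = ∅ := by
    rw [← Finset.card_eq_zero]
    exact zerofree_of_plt hw (by rw [hxz]; simp)
  rcases hw with hw | ⟨-, i, hbin, hab⟩
  · rw [hxz, hwz] at hw; simp at hw
  have hwge : ∀ j : Fin N, i < (x j : ℕ) → w j = x j := by
    intro j hj
    have : j ∈ rset w (x j : ℕ) := by
      rw [← hab _ hj]; exact mem_rset.2 rfl
    exact Fin.ext (mem_rset.1 this)
  rcases Nat.lt_or_ge i v with hiv | hiv
  · -- i < v : impossible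
    exfalso
    obtain ⟨m, hmW, hmX, -⟩ := hbin
    have h1 : (w m : ℕ) = i := mem_rset.1 hmW
    have h2 := hwge m (by have := hmin m; omega)
    have h4 : (w m : ℕ) = (x m : ℕ) := congrArg Fin.val h2
    have := hmin m
    omega
  rcases Nat.eq_or_lt_of_le hiv with heqv2 | hiv2
  · -- i = v : impossible
    exfalso
    obtain ⟨m, hmW, hmX, -⟩ := hbin
    have h1 : (w m : ℕ) = i := mem_rset.1 hmW
    have h2 : (x m : ℕ) ≠ i := by
      intro hc2; exact hmX (mem_rset.2 hc2)
    have h3 := hwge m (by have := hmin m; omega)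
    have h4 : (w m : ℕ) = (x m : ℕ) := congrArg Fin.val h3
    omega
  rcases Nat.lt_or_ge (v+1) i with hiv3 | hiv3
  · -- i ≥ v+2
    right
    right
    refine ⟨by rw [hcz, hwz], i, ?_, ?_⟩
    · rw [hca i (by omega)]; exact hbin
    · intro j hj
      rw [hca j (by omega)]; exact hab j hj
  have hieq : i = v + 1 := by omega
  subst hieq
  -- i = v+1, main case
  set W : Finset (Fin N) := rset w (v+1) with hW
  have hWC : ∀ j ∈ W, (x j : ℕ) ≤ v + 1 := by
    intro j hj
    by_contra hcon
    push_neg at hcon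
    have := hwge j (by omega)
    have h1 : (w j : ℕ) = v+1 := mem_rset.1 hj
    rw [this] at h1
    omega
  have hvS : fval S < fval W := fval_lt_of_binLT hbin
  -- gap lemma
  have hgap : fval S' ≤ fval W := by
    set a : ℕ := fval (S.filter (fun j => j < t)) with ha
    set b : ℕ := fval (S.filter (fun j => t < j)) with hb
    have hSsplit : fval S = a + b := by
      rw [ha, hb]
      have h1 : fval S = fval (S.filter (fun j => j < t)) + fval (S.filter (fun j => ¬ j < t)) :=
        (Finset.sum_filter_add_sum_filter_not S _ _).symm
      have h2 : S.filter (fun j => ¬ j < t) = S.filter (fun j => t < j) := by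
        apply Finset.filter_congr
        intro j hj
        have hjt : j ≠ t := by rintro rfl; exact htS hj
        constructor
        · intro hh; rcases lt_or_gt_of_ne hjt with h | h
          · exact absurd h hh
          · exact h
        · intro hh; exact not_lt.2 hh.le
      rw [h2] at h1
      exact h1
    have hS'val : fval S' = 2^(t:ℕ) + b := by
      rw [hS']
      exact Finset.sum_insert (by simp)
    have halt : a < 2^(t:ℕ) := by
      apply fval_lt_pow
      intro j hj
      have := (Finset.mem_filter.1 hj).2
      exact Fin.lt_def.1 this
    have hbdvd : 2^((t:ℕ)+1) ∣ b := by
      apply fval_dvd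
      intro j hj
      exact Fin.lt_def.1 (Finset.mem_filter.1 hj).2
    set Wlo : Finset (Fin N) := W.filter (fun j => j < t) with hWlo
    set Whi : Finset (Fin N) := W.filter (fun j => t < j) with hWhi
    have hWlosub : Wlo ⊆ S.filter (fun j => j < t) := by
      intro j hj
      obtain ⟨hj1, hj2⟩ := Finset.mem_filter.1 hj
      refine Finset.mem_filter.2 ⟨?_, hj2⟩
      have h1 := hWC j hj1
      have h2 := hmin j
      rw [hS, mem_rset]
      rcases Nat.eq_or_lt_of_le h2 with h3 | h3
      · exfalso
        have := htmin j h3.symm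
        exact absurd hj2 (not_lt.2 this)
      · omega
    have hWloval : fval Wlo ≤ a := fval_mono hWlosub
    have hWhidvd : 2^((t:ℕ)+1) ∣ fval Whi := by
      apply fval_dvd
      intro j hj
      exact Fin.lt_def.1 (Finset.mem_filter.1 hj).2
    have hpow : (2:ℕ)^((t:ℕ)+1) = 2^(t:ℕ) + 2^(t:ℕ) := by ring
    by_cases htW : t ∈ W
    · have hWsplit : fval W = fval Wlo + (2^(t:ℕ) + fval Whi) := by
        have h1 : fval W = fval Wlo + fval (W.filter (fun j => ¬ j < t)) :=
          (Finset.sum_filter_add_sum_filter_not W _ _).symm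
        have h2 : W.filter (fun j => ¬ j < t) = insert t Whi := by
          ext j
          constructor
          · intro hj
            obtain ⟨hj1, hj2⟩ := Finset.mem_filter.1 hj
            rcases eq_or_lt_of_le (not_lt.1 hj2) with h | h
            · exact Finset.mem_insert.2 (Or.inl h.symm)
            · exact Finset.mem_insert.2 (Or.inr (Finset.mem_filter.2 ⟨hj1, h⟩))
          · intro hj
            rcases Finset.mem_insert.1 hj with rfl | hj
            · exact Finset.mem_filter.2 ⟨htW, by simp⟩
            · obtain ⟨h3, h4⟩ := Finset.mem_filter.1 hj
              exact Finset.mem_filter.2 ⟨h3, not_lt.2 h4.le⟩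
        rw [h2] at h1
        have h3 : fval (insert t Whi) = 2^(t:ℕ) + fval Whi :=
          Finset.sum_insert (by rw [hWhi]; simp)
        omega
      by_contra hcon
      push_neg at hcon
      rw [hS'val] at hcon
      have hlt : fval Whi < b := by omega
      have := dvd_lt_imp hWhidvd hbdvd hlt
      omega
    · have hWsplit : fval W = fval Wlo + fval Whi := by
        have h1 : fval W = fval Wlo + fval (W.filter (fun j => ¬ j < t)) :=
          (Finset.sum_filter_add_sum_filter_not W _ _).symm
        have h2 : W.filter (fun j => ¬ j < t) = Whi := by
          ext j
          constructor
          · intro hj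
            obtain ⟨hj1, hj2⟩ := Finset.mem_filter.1 hj
            rcases eq_or_lt_of_le (not_lt.1 hj2) with h | h
            · exact absurd (h ▸ hj1) htW
            · exact Finset.mem_filter.2 ⟨hj1, h⟩
          · intro hj
            obtain ⟨hj1, hj2⟩ := Finset.mem_filter.1 hj
            exact Finset.mem_filter.2 ⟨hj1, not_lt.2 hj2.le⟩
        rw [h2] at h1
        exact h1
      rw [hS'val]
      rcases Nat.lt_or_ge (fval Whi) (b + 2^((t:ℕ)+1)) with h | h
      · exfalso
        have hble : fval Whi ≤ b := by
          by_contra hcon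
          push_neg at hcon
          have := dvd_lt_imp hbdvd hWhidvd hcon
          omega
        omega
      · omega
  -- use the gap
  rcases Nat.eq_or_lt_of_le hgap with heqv | hltv
  · -- W = S'
    have hWS' : W = S' := (fval_inj heqv).symm
    by_cases hcw : c = w
    · exact Or.inl hcw
    right
    -- find largest differing class
    set D : Finset ℕ := (Finset.range (k+1)).filter (fun i => rset c i ≠ rset w i) with hD
    have hDne : D.Nonempty := by
      by_contra hcon
      rw [Finset.not_nonempty_iff_eq_empty] at hcon
      apply hcw
      apply eq_of_rset_eq
      intro i
      rcases Nat.lt_or_ge k i with h1 | h1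
      · rw [rset_empty_of_gt c h1, rset_empty_of_gt w h1]
      · by_contra hne
        have : i ∈ D := Finset.mem_filter.2 ⟨Finset.mem_range.2 (by omega), hne⟩
        rw [hcon] at this
        simp at this
    set ℓ : ℕ := D.max' hDne with hℓ
    have hℓD : ℓ ∈ D := Finset.max'_mem _ _
    have hℓne : rset c ℓ ≠ rset w ℓ := (Finset.mem_filter.1 hℓD).2
    have hℓmax : ∀ i, rset c i ≠ rset w i → i ≤ ℓ := by
      intro i hi
      rcases Nat.lt_or_ge k i with h1 | h1
      · rw [rset_empty_of_gt c h1, rset_empty_of_gt w h1] at hi; simp at hi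
      · exact Finset.le_max' _ _ (Finset.mem_filter.2 ⟨Finset.mem_range.2 (by omega), hi⟩)
    have hwept : ∀ j : ℕ, v+1 ≤ j → rset c j = rset w j := by
      intro j hj
      rcases Nat.eq_or_lt_of_le hj with rfl | hj2
      · rw [hcb, hWS'.symm]
      · rw [hca j (by omega)]
        exact hab j (by omega)
    have hℓlt : ℓ ≤ v := by
      by_contra hcon
      push_neg at hcon
      exact hℓne (hwept ℓ (by omega))
    have hℓ2 : 2 ≤ ℓ := by
      by_contra hcon
      push_neg at hcon
      -- show all classes ≥ 2 equal then derive class 0,1 equal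
      have hgt : ∀ i : ℕ, 2 ≤ i → rset c i = rset w i := by
        intro i hi
        by_contra hne
        have := hℓmax i hne
        omega
      have hcw1 : ∀ j : Fin N, 2 ≤ (c j : ℕ) → w j = c j := by
        intro j hj
        have : j ∈ rset w (c j : ℕ) := by
          rw [← hgt _ hj]; exact mem_rset.2 rfl
        exact Fin.ext (mem_rset.1 this)
      have hwc1 : ∀ j : Fin N, 2 ≤ (w j : ℕ) → c j = w j := by
        intro j hj
        have : j ∈ rset c (w j : ℕ) := by
          rw [hgt _ hj]; exact mem_rset.2 rfl
        exact Fin.ext (mem_rset.1 this)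
      apply hcw
      funext j
      have hc1 : 1 ≤ (c j : ℕ) := by
        by_contra hcon2
        have : j ∈ rset c 0 := mem_rset.2 (by omega)
        rw [hcz] at this; simp at this
      have hw1 : 1 ≤ (w j : ℕ) := by
        by_contra hcon2
        have : j ∈ rset w 0 := mem_rset.2 (by omega)
        rw [hwz] at this; simp at this
      rcases Nat.lt_or_ge (c j : ℕ) 2 with h1 | h1
      · rcases Nat.lt_or_ge (w j : ℕ) 2 with h2 | h2
        · exact Fin.ext (by omega)
        · exact (hwc1 j h2).symm ▸ rfl
      · exact (hcw1 j h1).symm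
    -- plt c w at class ℓ
    right
    refine ⟨by rw [hcz, hwz], ℓ, ?_, ?_⟩
    · have hce : rset c ℓ = ∅ := hcc ℓ hℓ2 hℓlt
      have hwne : (rset w ℓ).Nonempty := by
        rw [Finset.nonempty_iff_ne_empty]
        intro hcon
        exact hℓne (by rw [hce, hcon])
      refine ⟨(rset w ℓ).max' hwne, Finset.max'_mem _ _, by rw [hce]; simp, ?_⟩
      intro j hj
      rcases hj with ⟨hj1, -⟩ | ⟨hj1, -⟩
      · rw [hce] at hj1; simp at hj1
      · exact Finset.le_max' _ _ hj1
    · intro j hj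
      by_contra hne
      have := hℓmax j hne
      omega
  · -- fval S' < fval W
    right
    right
    refine ⟨by rw [hcz, hwz], v+1, ?_, ?_⟩
    · rw [hcb]
      exact binLT_of_fval_lt hltv
    · intro j hj
      rw [hca j (by omega)]
      exact hab j (by omega)

end succ

lemma rset_update (y : Fin N → Fin (k+1)) (j : Fin N) (b : Fin (k+1)) (i : ℕ) :
    rset (Function.update y j b) i =
      if (b : ℕ) = i then insert j (rset y i) else (rset y i).erase j := by
  ext q
  by_cases hq : q = j
  · subst hq
    simp only [mem_rset, Function.update_self]
    split_ifs with h
    · simp [h]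
    · simp [h]
  · simp only [mem_rset, Function.update_of_ne hq]
    split_ifs with h
    · simp [Finset.mem_insert, hq, mem_rset]
    · simp [Finset.mem_erase, hq, mem_rset]

lemma plt_raise (y : Fin N → Fin (k+1)) (j : Fin N) (b : Fin (k+1))
    (h1 : 1 ≤ (y j : ℕ)) (h : (y j : ℕ) < (b : ℕ)) :
    plt y (Function.update y j b) := by
  right
  constructor
  · congr 1
    rw [rset_update]
    split_ifs with hb
    · omega
    · symm
      apply Finset.erase_eq_of_notMem
      simp only [mem_rset]
      omega
  · refine ⟨(b : ℕ), ⟨j, ?_, ?_, ?_⟩, ?_⟩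
    · rw [rset_update]
      simp
    · simp only [mem_rset]; omega
    · intro q hq
      rcases hq with ⟨hq1, hq2⟩ | ⟨hq1, hq2⟩
      · exfalso
        rw [mem_rset] at hq1
        rw [rset_update] at hq2
        simp only [if_pos rfl] at hq2
        exact hq2 (Finset.mem_insert.2 (Or.inr (mem_rset.2 hq1)))
      · rw [rset_update] at hq1
        simp only [if_pos rfl] at hq1
        rcases Finset.mem_insert.1 hq1 with rfl | hmem
        · exact le_refl _
        · exfalso
          exact hq2 hmem
    · intro i hi
      rw [rset_update]
      split_ifs with hb
      · omega
      · symm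
        apply Finset.erase_eq_of_notMem
        simp only [mem_rset]
        omega

lemma plt_of_top {y z : Fin N → Fin (k+1)} (hk : 1 ≤ k) (htop : ∀ j, (y j : ℕ) = k) :
    ¬ plt y z := by
  intro hplt
  have hy0 : rset y 0 = ∅ := by
    ext j; simp only [mem_rset, Finset.notMem_empty, iff_false]
    rw [htop j]; omega
  have hyk : rset y k = Finset.univ := by
    ext j; simp [mem_rset, htop j]
  rcases hplt with h | ⟨-, i, hbin, hab⟩
  · rw [hy0] at h; simp at h
  obtain ⟨m, hmZ, hmY, -⟩ := hbin
  have him : i ≤ k := by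
    have := mem_rset.1 hmZ
    have := (z m).isLt
    omega
  rcases Nat.eq_or_lt_of_le him with rfl | hik
  · rw [hyk] at hmY
    exact hmY (Finset.mem_univ m)
  · have hzk : rset z k = Finset.univ := by rw [← hab k hik, hyk]
    have : (z m : ℕ) = i := mem_rset.1 hmZ
    have : (z m : ℕ) = k := mem_rset.1 (hzk ▸ Finset.mem_univ m)
    omega

lemma rset0_empty {y : Fin N → Fin (k+1)} (h : ∀ j, 1 ≤ (y j : ℕ)) : rset y 0 = ∅ := by
  ext j
  simp only [mem_rset, Finset.notMem_empty, iff_false]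
  have := h j
  omega

lemma mem_dShadow {A : Finset (Fin N → Fin (k+1))} {z : Fin N → Fin (k+1)} :
    z ∈ dShadow A ↔ ∃ y ∈ A, ∃ p, y p ≠ 0 ∧ Function.update y p 0 = z := by
  simp only [dShadow, Finset.mem_biUnion, Finset.mem_image, Finset.mem_filter,
    Finset.mem_univ, true_and]

lemma dShadow_mono {A B : Finset (Fin N → Fin (k+1))} (h : A ⊆ B) :
    dShadow A ⊆ dShadow B := by
  intro z hz
  obtain ⟨y, hy, p, hp, hupd⟩ := mem_dShadow.1 hz
  exact mem_dShadow.2 ⟨y, h hy, p, hp, hupd⟩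

end aux

/-- **Claim 12.** Let `n ≥ 3`, `3 ≤ L ≤ k`, and let `x_1, …, x_{L−1} ∈ {1,…,L−1}^n` be
consecutive points under the `≤`-order on `[k]^n`. Let `X = {y : y ≤ x_{L−1}}` and
`Y = {y : y ≤ x_1}`. Then `|d(X)| = |d(Y)|` iff for every `1 ≤ i ≤ L−1` the point `x_i`
has first coordinate `i` and all other coordinates `L−1`.
(Dimension `n ≥ 3` is rendered as `n + 1` with `n ≥ 2`; the first index is
`0 : Fin (n+1)`; alphabet `[k]` as `Fin (k+1)`, so `L ≤ k + 1`.) -/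
theorem claim12 (k n L : ℕ) (hn : 2 ≤ n) (hL1 : 3 ≤ L) (hL2 : L ≤ k + 1)
    (x : ℕ → (Fin (n + 1) → Fin (k + 1)))
    (hbox : ∀ i, 1 ≤ i → i ≤ L - 1 →
      ∀ j : Fin (n + 1), 1 ≤ ((x i) j : ℕ) ∧ ((x i) j : ℕ) ≤ L - 1)
    (hcons : ∀ i, 1 ≤ i → i ≤ L - 2 →
      plt (x i) (x (i + 1)) ∧
        ∀ z : Fin (n + 1) → Fin (k + 1), plt (x i) z → ple (x (i + 1)) z) :
    (dShadow (Finset.univ.filter fun y => ple y (x (L - 1)))).card =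
        (dShadow (Finset.univ.filter fun y => ple y (x 1))).card ↔
      ∀ i, 1 ≤ i → i ≤ L - 1 →
        ((x i) 0 : ℕ) = i ∧ ∀ j : Fin (n + 1), j ≠ 0 → ((x i) j : ℕ) = L - 1 := by
  classical
  have hk2 : 2 ≤ k := by omega
  -- step lemma from consecutiveness
  have hstep : ∀ i, 1 ≤ i → i ≤ L - 2 → rank (x i) < rank (x (i+1)) := by
    intro i h1 h2
    exact plt_iff_rank.1 (hcons i h1 h2).1
  have hchain : ∀ d i, 1 ≤ i → i + d ≤ L - 1 → rank (x i) ≤ rank (x (i + d)) := by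
    intro d
    induction d with
    | zero => intro i _ _; simp
    | succ d ih =>
        intro i h1 h2
        have e1 : i + (d+1) = (i+d) + 1 := by omega
        rw [e1]
        calc rank (x i) ≤ rank (x (i+d)) := ih i h1 (by omega)
          _ ≤ rank (x (i+d+1)) := le_of_lt (hstep (i+d) (by omega) (by omega))
  have hchainlt : ∀ i1 i2, 1 ≤ i1 → i1 < i2 → i2 ≤ L - 1 →
      rank (x i1) < rank (x i2) := by
    intro i1 i2 h1 h2 h3
    have e1 : i2 = (i1 + 1) + (i2 - i1 - 1) := by omega
    calc rank (x i1) < rank (x (i1+1)) := hstep i1 h1 (by omega)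
      _ ≤ rank (x ((i1+1) + (i2 - i1 - 1))) := hchain _ _ (by omega) (by omega)
      _ = rank (x i2) := by rw [← e1]
  have hsand : ∀ w, plt (x 1) w → ple w (x (L-1)) →
      ∃ i, 2 ≤ i ∧ i ≤ L - 1 ∧ w = x i := by
    have key : ∀ d, 1 + d ≤ L - 1 → ∀ w, plt (x 1) w → ple w (x (1+d)) →
        ∃ i, 2 ≤ i ∧ i ≤ 1 + d ∧ w = x i := by
      intro d
      induction d with
      | zero =>
          intro _ w h1 h2
          simp only [Nat.add_zero] at h2
          have := plt_iff_rank.1 h1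
          have := ple_iff_rank.1 h2
          omega
      | succ d ih =>
          intro hle w h1 h2
          rcases Nat.lt_or_ge (rank (x (1+d))) (rank w) with hc | hc
          · have hplt : plt (x (1+d)) w := plt_iff_rank.2 hc
            have hmin := (hcons (1+d) (by omega) (by omega)).2 w hplt
            have e1 : 1 + (d+1) = (1+d)+1 := by omega
            have hle2 : rank w ≤ rank (x ((1+d)+1)) := by
              rw [← e1]; exact ple_iff_rank.1 h2
            have hge2 : rank (x ((1+d)+1)) ≤ rank w := ple_iff_rank.1 hmin
            have heq : w = x (1 + (d+1)) := by
              rw [e1]; exact (rank_inj (le_antisymm hge2 hle2)).symm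
            exact ⟨1 + (d+1), by omega, by omega, heq⟩
          · obtain ⟨i, hi1, hi2, hi3⟩ := ih (by omega) w h1 (ple_iff_rank.2 hc)
            exact ⟨i, hi1, by omega, hi3⟩
    intro w h1 h2
    have e1 : L - 1 = 1 + (L - 2) := by omega
    rw [e1] at h2
    obtain ⟨i, hi1, hi2, hi3⟩ := key (L-2) (by omega) w h1 h2
    exact ⟨i, hi1, by omega, hi3⟩
  -- the two shadow sets
  set X : Finset (Fin (n+1) → Fin (k+1)) :=
    Finset.univ.filter (fun y => ple y (x (L-1))) with hXdef
  set Y : Finset (Fin (n+1) → Fin (k+1)) :=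
    Finset.univ.filter (fun y => ple y (x 1)) with hYdef
  have hYsubX : Y ⊆ X := by
    intro y hy
    rw [hYdef, Finset.mem_filter] at hy
    rw [hXdef, Finset.mem_filter]
    refine ⟨Finset.mem_univ _, ?_⟩
    apply ple_iff_rank.2
    calc rank y ≤ rank (x 1) := ple_iff_rank.1 hy.2
      _ ≤ rank (x (1 + (L-2))) := hchain (L-2) 1 (by omega) (by omega)
      _ = rank (x (L-1)) := by
          have e1 : 1 + (L-2) = L-1 := by omega
          rw [e1]
  have hdsub : dShadow Y ⊆ dShadow X := dShadow_mono hYsubX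
  constructor
  · -- hard direction
    intro hcard
    have hXY : dShadow X = dShadow Y :=
      ((Finset.eq_of_subset_of_card_le hdsub (le_of_eq hcard))).symm
    have hge2 : ∀ i, 2 ≤ i → i ≤ L - 1 → ∀ j : Fin (n+1), 2 ≤ ((x i) j : ℕ) := by
      intro i h2 hM j
      by_contra hcon
      push_neg at hcon
      have hbx := hbox i (by omega) (by omega)
      have hx1 : ((x i) j : ℕ) = 1 := by have := (hbx j).1; omega
      have hzX : Function.update (x i) j 0 ∈ dShadow X := by
        refine mem_dShadow.2 ⟨x i, ?_, j, ?_, rfl⟩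
        · rw [hXdef, Finset.mem_filter]
          refine ⟨Finset.mem_univ _, ple_iff_rank.2 ?_⟩
          have e1 : L - 1 = i + (L-1-i) := by omega
          rw [e1]
          exact hchain _ _ (by omega) (by omega)
        · intro hc0
          rw [hc0] at hx1; simp at hx1
      rw [hXY] at hzX
      obtain ⟨w, hwY, p, hp, hupd⟩ := mem_dShadow.1 hzX
      rw [hYdef, Finset.mem_filter] at hwY
      have hpj : p = j := by
        by_contra hpj
        have h1 := congrFun hupd p
        rw [Function.update_self, Function.update_of_ne hpj] at h1
        have h2 : (((x i) p : ℕ)) = ((0 : Fin (k+1)) : ℕ) := congrArg Fin.val h1.symm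
        simp only [Fin.val_zero] at h2
        have := (hbx p).1
        omega
      subst hpj
      have hwq : ∀ q, q ≠ p → w q = (x i) q := by
        intro q hq
        have h1 := congrFun hupd q
        rw [Function.update_of_ne hq, Function.update_of_ne hq] at h1
        exact h1
      have hwj1 : 1 ≤ (w p : ℕ) := by
        by_contra hc
        push_neg at hc
        have h3 : (w p : ℕ) = 0 := by omega
        exact hp (Fin.ext (by simp [h3]))
      rcases Nat.lt_or_ge (w p : ℕ) 2 with hw2 | hw2
      · have hweq : w = x i := by
          funext q
          by_cases hq : q = p
          · subst hq; exact Fin.ext (by omega)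
          · exact hwq q hq
        have hr1 : rank (x i) ≤ rank (x 1) := by
          have := ple_iff_rank.1 hwY.2
          rw [hweq] at this
          exact this
        have hr2 : rank (x 1) < rank (x i) := hchainlt 1 i (by omega) (by omega) (by omega)
        omega
      · have hwup : w = Function.update (x i) p (w p) := by
          funext q
          by_cases hq : q = p
          · subst hq; rw [Function.update_self]
          · rw [Function.update_of_ne hq]; exact hwq q hq
        have hpltw : plt (x i) w := by
          conv_rhs => rw [hwup]
          exact plt_raise (x i) p (w p) (by omega) (by omega)
        have hr1 : rank (x i) < rank w := plt_iff_rank.1 hpltw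
        have hr2 : rank w ≤ rank (x 1) := ple_iff_rank.1 hwY.2
        have hr3 : rank (x 1) < rank (x i) := hchainlt 1 i (by omega) (by omega) (by omega)
        omega
    -- structural analysis
    set vm : ℕ → ℕ := fun i => Finset.univ.inf' ⟨(0 : Fin (n+1)), Finset.mem_univ _⟩
        (fun j => ((x i) j : ℕ)) with hvmdef
    have hvle : ∀ i j, vm i ≤ ((x i) j : ℕ) := by
      intro i j
      exact Finset.inf'_le _ (Finset.mem_univ j)
    have hrne : ∀ i, (rset (x i) (vm i)).Nonempty := by
      intro i
      obtain ⟨j, -, hj⟩ := Finset.exists_mem_eq_inf'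
        (⟨(0 : Fin (n+1)), Finset.mem_univ _⟩ : (Finset.univ : Finset (Fin (n+1))).Nonempty)
        (fun j => ((x i) j : ℕ))
      exact ⟨j, mem_rset.2 hj.symm⟩
    set tf : ℕ → Fin (n+1) := fun i => (rset (x i) (vm i)).min' (hrne i) with htfdef
    have htf_att : ∀ i, ((x i) (tf i) : ℕ) = vm i := by
      intro i
      exact mem_rset.1 (Finset.min'_mem _ (hrne i))
    have htf_min : ∀ i j, ((x i) j : ℕ) = vm i → tf i ≤ j := by
      intro i j hj
      exact Finset.min'_le _ _ (mem_rset.2 hj)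
    have hbump : ∀ i, 1 ≤ i → i ≤ L - 2 →
        (∀ j, ((x i) j : ℕ) = vm i → j = tf i) ∧
        (∀ j : Fin (n+1), j < tf i → vm i + 2 ≤ ((x i) j : ℕ)) ∧
        (∀ j, ((x (i+1)) j : ℕ) =
          if ((x i) j : ℕ) ≤ vm i + 1 then vm i + 1 else ((x i) j : ℕ)) := by
      intro i hi1 hi2
      have hbx := hbox i (by omega) (by omega)
      have hv1 : 1 ≤ vm i := by
        have h1 := htf_att i
        have := (hbx (tf i)).1
        omega
      have hvk : vm i < k := by
        by_contra hcon
        push_neg at hcon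
        have htop : ∀ j, ((x i) j : ℕ) = k := by
          intro j
          have := hvle i j
          have := (hbx j).2
          omega
        exact plt_of_top (by omega) htop (hcons i hi1 (by omega)).1
      set c : Fin (n+1) → Fin (k+1) := fun j =>
        if ((x i) j : ℕ) ≤ vm i + 1 then
          (if j ∈ insert (tf i) ((rset (x i) (vm i + 1)).filter (fun q => tf i < q))
            then (⟨vm i + 1, by omega⟩ : Fin (k+1)) else (⟨1, by omega⟩ : Fin (k+1)))
        else (x i) j with hcdef
      have hcval : ∀ j, (c j : ℕ) =
          if ((x i) j : ℕ) ≤ vm i + 1 then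
            (if j ∈ insert (tf i) ((rset (x i) (vm i+1)).filter (fun q => tf i < q))
              then vm i + 1 else 1)
          else ((x i) j : ℕ) := by
        intro j
        simp only [hcdef]
        split_ifs <;> rfl
      obtain ⟨hcplt, hcmin⟩ :=
        succ_spec (x i) c (vm i) (tf i) hv1 hvk (hvle i) (htf_att i) (htf_min i) hcval
      have hxc : x (i+1) = c := by
        have h1 : rank (x (i+1)) ≤ rank c :=
          ple_iff_rank.1 ((hcons i hi1 (by omega)).2 c hcplt)
        have h2 : rank c ≤ rank (x (i+1)) :=
          ple_iff_rank.1 (hcmin (x (i+1)) (hcons i hi1 (by omega)).1)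
        exact rank_inj (le_antisymm h1 h2)
      have hno1 : ∀ j, ((x (i+1)) j : ℕ) ≠ 1 := by
        intro j
        have := hge2 (i+1) (by omega) (by omega) j
        omega
      have hCS : ∀ j, ((x i) j : ℕ) ≤ vm i + 1 →
          j ∈ insert (tf i) ((rset (x i) (vm i+1)).filter (fun q => tf i < q)) := by
        intro j hj
        by_contra hc2
        have h3 := hcval j
        rw [if_pos hj, if_neg hc2] at h3
        apply hno1 j
        rw [hxc]
        exact h3
      refine ⟨?_, ?_, ?_⟩
      · intro j hj
        have hmem := hCS j (by omega)
        rcases Finset.mem_insert.1 hmem with h | h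
        · exact h
        · exfalso
          have := (Finset.mem_filter.1 h).1
          rw [mem_rset] at this
          omega
      · intro j hjlt
        by_contra hc2
        push_neg at hc2
        have hmem := hCS j (by omega)
        rcases Finset.mem_insert.1 hmem with h | h
        · rw [h] at hjlt
          exact lt_irrefl _ hjlt
        · have := (Finset.mem_filter.1 h).2
          exact absurd hjlt (not_lt.2 this.le)
      · intro j
        rw [hxc, hcval j]
        by_cases hj : ((x i) j : ℕ) ≤ vm i + 1
        · rw [if_pos hj, if_pos (hCS j hj), if_pos hj]
        · rw [if_neg hj, if_neg hj]
    have hvsucc : ∀ i, 1 ≤ i → i ≤ L - 2 → vm (i+1) = vm i + 1 := by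
      intro i h1 h2
      obtain ⟨-, -, hd⟩ := hbump i h1 h2
      have hub : ∀ j, vm i + 1 ≤ ((x (i+1)) j : ℕ) := by
        intro j
        rw [hd j]
        split_ifs with h
        · omega
        · omega
      have hattain : ((x (i+1)) (tf i) : ℕ) = vm i + 1 := by
        rw [hd (tf i), if_pos (by rw [htf_att i]; omega)]
      apply le_antisymm
      · calc vm (i+1) ≤ ((x (i+1)) (tf i) : ℕ) := hvle (i+1) (tf i)
          _ = vm i + 1 := hattain
      · exact Finset.le_inf' _ _ (fun j _ => hub j)
    have hvlin : ∀ d, 1 + d ≤ L - 1 → vm (1 + d) = vm 1 + d := by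
      intro d
      induction d with
      | zero => intro _; simp
      | succ d ih =>
          intro h
          have e1 : 1 + (d+1) = (1+d)+1 := by omega
          rw [e1, hvsucc (1+d) (by omega) (by omega), ih (by omega)]
          omega
    have hminclass : ∀ i, 1 ≤ i → i ≤ L-2 → ∀ j,
        (((x (i+1)) j : ℕ) = vm (i+1) ↔ ((x i) j : ℕ) ≤ vm i + 1) := by
      intro i h1 h2 j
      obtain ⟨-, -, hd⟩ := hbump i h1 h2
      rw [hd j, hvsucc i h1 h2]
      split_ifs with h
      · exact iff_of_true rfl h
      · exact iff_of_false (by omega) h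
    have htch : ∀ i, 1 ≤ i → i + 1 ≤ L - 2 → tf (i+1) = tf i := by
      intro i h1 h2
      have hsing := (hbump (i+1) (by omega) h2).1
      have h3 : ((x (i+1)) (tf i) : ℕ) = vm (i+1) :=
        (hminclass i h1 (by omega) (tf i)).2 (by rw [htf_att i]; omega)
      exact (hsing (tf i) h3).symm
    have htconst : ∀ i, 1 ≤ i → i ≤ L - 2 → tf i = tf 1 := by
      have key : ∀ d, 1 + d ≤ L-2 → tf (1+d) = tf 1 := by
        intro d
        induction d with
        | zero => intro _; rfl
        | succ d ih =>
            intro h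
            have e1 : 1 + (d+1) = (1+d)+1 := by omega
            rw [e1, htch (1+d) (by omega) (by omega), ih (by omega)]
      intro i h1 h2
      have e : i = 1 + (i-1) := by omega
      rw [e]
      exact key (i-1) (by omega)
    have hsing2 : ∀ i, 1 ≤ i → i + 1 ≤ L - 2 → ∀ j, j ≠ tf 1 →
        vm i + 2 ≤ ((x i) j : ℕ) := by
      intro i h1 h2 j hj
      by_contra hc
      push_neg at hc
      have h3 : ((x (i+1)) j : ℕ) = vm (i+1) :=
        (hminclass i h1 (by omega) j).2 (by omega)
      have h4 := (hbump (i+1) (by omega) h2).1 j h3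
      rw [htch i h1 h2, htconst i h1 (by omega)] at h4
      exact hj h4
    have hv11 : vm 1 = 1 := by
      have hd := (hbump (L-2) (by omega) (by omega)).2.2
      have e1 : L - 2 + 1 = L - 1 := by omega
      have h3 : ((x (L-1)) (tf (L-2)) : ℕ) = vm (L-2) + 1 := by
        rw [← e1, hd (tf (L-2)), if_pos (by rw [htf_att]; omega)]
      have h4 : vm (L-2) = vm 1 + (L - 3) := by
        have e2 : L - 2 = 1 + (L-3) := by omega
        rw [e2, hvlin (L-3) (by omega)]
      have h5 := (hbox (L-1) (by omega) (by omega) (tf (L-2))).2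
      have h6 : 1 ≤ vm 1 := by
        have h7 := htf_att 1
        have := (hbox 1 (by omega) (by omega) (tf 1)).1
        omega
      omega
    have hvL2 : vm (L-2) = L - 2 := by
      have h4 : vm (L-2) = vm 1 + (L - 3) := by
        have e2 : L - 2 = 1 + (L-3) := by omega
        rw [e2, hvlin (L-3) (by omega)]
      omega
    have ht0 : tf 1 = 0 := by
      by_contra hc
      have hpos : (0 : Fin (n+1)) < tf 1 := Fin.pos_iff_ne_zero.2 hc
      have hb := (hbump (L-2) (by omega) (by omega)).2.1 0
        (by rw [htconst (L-2) (by omega) (by omega)]; exact hpos)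
      have h5 := (hbox (L-2) (by omega) (by omega) 0).2
      omega
    have hoffL2 : ∀ j : Fin (n+1), j ≠ 0 → ((x (L-2)) j : ℕ) = L - 1 := by
      intro j hj
      have hb1 := (hbump (L-2) (by omega) (by omega)).1
      have h1 : ((x (L-2)) j : ℕ) ≠ vm (L-2) := by
        intro hc
        have h2 := hb1 j hc
        rw [htconst (L-2) (by omega) (by omega), ht0] at h2
        exact hj h2
      have h2 := hvle (L-2) j
      have h3 := (hbox (L-2) (by omega) (by omega) j).2
      omega
    have hoffall : ∀ d, 1 + d ≤ L-2 → ∀ j : Fin (n+1), j ≠ 0 →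
        ((x (1+d)) j : ℕ) = ((x 1) j : ℕ) := by
      intro d
      induction d with
      | zero => intro _ j _; rfl
      | succ d ih =>
          intro h j hj
          have e1 : 1 + (d+1) = (1+d)+1 := by omega
          have hd2 := (hbump (1+d) (by omega) (by omega)).2.2 j
          have hs := hsing2 (1+d) (by omega) (by omega) j (by rw [ht0]; exact hj)
          rw [e1, hd2, if_neg (by omega)]
          exact ih (by omega) j hj
    have hoff1 : ∀ j : Fin (n+1), j ≠ 0 → ((x 1) j : ℕ) = L - 1 := by
      intro j hj
      have h1 := hoffall (L-3) (by omega) j hj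
      have e1 : 1 + (L-3) = L-2 := by omega
      rw [e1] at h1
      rw [← h1]
      exact hoffL2 j hj
    have hoffany : ∀ i, 1 ≤ i → i ≤ L-1 → ∀ j : Fin (n+1), j ≠ 0 →
        ((x i) j : ℕ) = L - 1 := by
      intro i h1 h2 j hj
      rcases Nat.lt_or_ge i (L-1) with h3 | h3
      · have h4 := hoffall (i-1) (by omega) j hj
        have e1 : 1 + (i-1) = i := by omega
        rw [e1] at h4
        rw [h4]
        exact hoff1 j hj
      · have hi : i = L - 1 := by omega
        subst hi
        have hd := (hbump (L-2) (by omega) (by omega)).2.2 j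
        have e1 : L - 2 + 1 = L - 1 := by omega
        have h5 := hoffL2 j hj
        rw [← e1, hd, if_pos (by omega)]
        omega
    have hzero : ∀ d, 1 + d ≤ L-1 → ((x (1+d)) 0 : ℕ) = 1 + d := by
      intro d
      induction d with
      | zero =>
          intro _
          have h1 := htf_att 1
          rw [ht0] at h1
          rw [h1, hv11]
      | succ d ih =>
          intro h
          have e1 : 1 + (d+1) = (1+d)+1 := by omega
          have hd2 := (hbump (1+d) (by omega) (by omega)).2.2 0
          have hv : vm (1+d) = 1 + d := by
            rw [hvlin d (by omega), hv11]
          have hih := ih (by omega)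
          rw [e1, hd2, if_pos (by omega)]
          omega
    intro i h1 h2
    refine ⟨?_, fun j hj => hoffany i h1 h2 j hj⟩
    have h3 := hzero (i-1) (by omega)
    have e1 : 1 + (i-1) = i := by omega
    rw [e1] at h3
    omega
  · -- easy direction
    intro hrhs
    have hXYeq : dShadow X = dShadow Y := by
      apply Finset.Subset.antisymm _ hdsub
      intro z hz
      obtain ⟨w, hwX, p, hp, hupd⟩ := mem_dShadow.1 hz
      rw [hXdef, Finset.mem_filter] at hwX
      by_cases hw1 : ple w (x 1)
      · refine mem_dShadow.2 ⟨w, ?_, p, hp, hupd⟩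
        rw [hYdef, Finset.mem_filter]
        exact ⟨Finset.mem_univ _, hw1⟩
      · have hwne : w ≠ x 1 := fun hcon => hw1 (Or.inl hcon)
        have hplt : plt (x 1) w := by
          rcases plt_total hwne with h | h
          · exact absurd (Or.inr h) hw1
          · exact h
        obtain ⟨i, hi2, hiM, rfl⟩ := hsand w hplt hwX.2
        have hxi := hrhs i (by omega) hiM
        by_cases hp0 : p = 0
        · subst hp0
          refine mem_dShadow.2 ⟨x 1, ?_, 0, ?_, ?_⟩
          · rw [hYdef, Finset.mem_filter]; exact ⟨Finset.mem_univ _, Or.inl rfl⟩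
          · have h1 := (hrhs 1 (by omega) (by omega)).1
            intro hcon; rw [hcon] at h1; simp at h1
          · rw [← hupd]
            funext q
            by_cases hq : q = 0
            · subst hq; simp [Function.update_self]
            · rw [Function.update_of_ne hq, Function.update_of_ne hq]
              have e1 := (hrhs 1 (by omega) (by omega)).2 q hq
              have e2 := hxi.2 q hq
              exact Fin.ext (by rw [e1, e2])
        · set w' : Fin (n+1) → Fin (k+1) := Function.update (x i) p ⟨1, by omega⟩ with hw'def
          have hw'val : ∀ q, (w' q : ℕ) = if q = p then 1 else ((x i) q : ℕ) := by
            intro q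
            rw [hw'def]
            by_cases hq : q = p
            · subst hq; rw [Function.update_self]; simp
            · rw [Function.update_of_ne hq]; simp [hq]
          have hzf1 : rset w' 0 = ∅ := rset0_empty (by
            intro q; rw [hw'val q]
            split_ifs
            · omega
            · exact (hbox i (by omega) (by omega) q).1)
          have hzfx1 : rset (x 1) 0 = ∅ :=
            rset0_empty (fun q => (hbox 1 (by omega) (by omega) q).1)
          have hw'plt : plt w' (x 1) := by
            right
            refine ⟨by rw [hzf1, hzfx1], L-1, ⟨p, ?_, ?_, ?_⟩, ?_⟩
            · exact mem_rset.2 ((hrhs 1 (by omega) (by omega)).2 p hp0)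
            · rw [mem_rset, hw'val, if_pos rfl]
              omega
            · intro q hq
              have hqcases : q = 0 ∨ q = p := by
                by_contra hcon
                push_neg at hcon
                obtain ⟨hq0, hqp⟩ := hcon
                have e1 : (w' q : ℕ) = L-1 := by
                  rw [hw'val, if_neg hqp]; exact hxi.2 q hq0
                have e2 : ((x 1) q : ℕ) = L-1 := (hrhs 1 (by omega) (by omega)).2 q hq0
                rcases hq with ⟨h1, h2⟩ | ⟨h1, h2⟩
                · exact h2 (mem_rset.2 e2)
                · exact h2 (mem_rset.2 e1)
              rcases hqcases with rfl | rfl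
              · exact Fin.zero_le p
              · exact le_refl _
            · intro jj hjj
              have e1 : rset w' jj = ∅ := by
                ext q; simp only [mem_rset, Finset.notMem_empty, iff_false]
                rw [hw'val]
                split_ifs
                · omega
                · have := (hbox i (by omega) (by omega) q).2; omega
              have e2 : rset (x 1) jj = ∅ := by
                ext q; simp only [mem_rset, Finset.notMem_empty, iff_false]
                have := (hbox 1 (by omega) (by omega) q).2; omega
              rw [e1, e2]
          refine mem_dShadow.2 ⟨w', ?_, p, ?_, ?_⟩
          · rw [hYdef, Finset.mem_filter]; exact ⟨Finset.mem_univ _, Or.inr hw'plt⟩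
          · intro hcon
            have h1 : (w' p : ℕ) = 1 := by rw [hw'val]; simp
            rw [hcon] at h1; simp at h1
          · rw [hw'def, ← hupd]
            exact Function.update_idem _ _ _
    rw [hXYeq]
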